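/- Let ζ > 1 and let Λ be a stochastic process on a probability space (Ω, P) with almost surely nondecreasing paths and Λ(0) = 0, satisfying condition (DIFF) with exponent ζ. Then for P-almost every ω, the ratio Λ(t)(ω)/t converges to 1 as the real parameter t tends to infinity. -/

import Mathlib

open MeasureTheory Filter

/-- Pointwise sandwich step: if `f` is nondecreasing on `[0,∞)`, `f 0 = 0`,
and `f n / n → 1` along naturals, then `f t / t → 1` along reals. -/
lemma aux_ratio_tendsto (f : ℝ → ℝ) (hmono : MonotoneOn f (Set.Ici (0 : ℝ)))
    (h0 : f 0 = 0)
    (hnat : Tendsto (fun n : ℕ => f n / n) atTop (nhds 1)) :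
    Tendsto (fun t : ℝ => f t / t) atTop (nhds 1) := by
  have hnn : ∀ x : ℝ, 0 ≤ x → 0 ≤ f x := by
    intro x hx
    have := hmono (Set.mem_Ici.2 le_rfl) (Set.mem_Ici.2 hx) hx
    linarith [this, h0.ge]
  -- limit of n/(n+1)
  have hq1 : Tendsto (fun n : ℕ => (n : ℝ) / (n + 1)) atTop (nhds 1) := by
    have h := tendsto_one_div_add_atTop_nhds_zero_nat (𝕜 := ℝ)
    have := (tendsto_const_nhds (x := (1:ℝ)) (f := atTop)).sub h
    simp only [sub_zero] at this
    refine this.congr fun n => ?_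
    have hn1 : (0:ℝ) < (n:ℝ) + 1 := by positivity
    field_simp
    try ring
  -- limit of (n+1)/n
  have hq2 : Tendsto (fun n : ℕ => ((n : ℝ) + 1) / n) atTop (nhds 1) := by
    have h := tendsto_one_div_atTop_nhds_zero_nat (𝕜 := ℝ)
    have := (tendsto_const_nhds (x := (1:ℝ)) (f := atTop)).add h
    simp only [add_zero] at this
    refine this.congr' ?_
    filter_upwards [eventually_ge_atTop 1] with n hn
    have hn0 : (0:ℝ) < (n:ℝ) := by exact_mod_cast hn
    field_simp
    try ring
  have L1 : Tendsto (fun n : ℕ => f n / ((n : ℝ) + 1)) atTop (nhds 1) := by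
    have := hnat.mul hq1
    rw [one_mul] at this
    refine this.congr' ?_
    filter_upwards [eventually_ge_atTop 1] with n hn
    have hn0 : (0:ℝ) < (n:ℝ) := by exact_mod_cast hn
    field_simp
    try ring
  have hnat' : Tendsto (fun n : ℕ => f ((n : ℝ) + 1) / ((n : ℝ) + 1)) atTop (nhds 1) := by
    have := hnat.comp (tendsto_add_atTop_nat 1)
    refine this.congr fun n => ?_
    simp [Function.comp]
    try push_cast
    try ring_nf
  have L2 : Tendsto (fun n : ℕ => f ((n : ℝ) + 1) / n) atTop (nhds 1) := by
    have := hnat'.mul hq2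
    rw [one_mul] at this
    refine this.congr' ?_
    filter_upwards [eventually_ge_atTop 1] with n hn
    have hn0 : (0:ℝ) < (n:ℝ) := by exact_mod_cast hn
    have hn1 : (0:ℝ) < (n:ℝ) + 1 := by positivity
    field_simp
    try ring
  have hfloor : Tendsto (fun t : ℝ => (⌊t⌋₊ : ℕ)) atTop atTop := tendsto_nat_floor_atTop
  refine tendsto_of_tendsto_of_tendsto_of_le_of_le' (L1.comp hfloor) (L2.comp hfloor) ?_ ?_
  · filter_upwards [eventually_ge_atTop (1:ℝ)] with t ht
    have ht0 : (0:ℝ) < t := lt_of_lt_of_le one_pos ht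
    have hfl : (1:ℕ) ≤ ⌊t⌋₊ := Nat.le_floor (by exact_mod_cast ht)
    have hnt : ((⌊t⌋₊ : ℕ) : ℝ) ≤ t := Nat.floor_le ht0.le
    have htn1 : t ≤ (⌊t⌋₊ : ℝ) + 1 := (Nat.lt_floor_add_one t).le
    have hfn : 0 ≤ f (⌊t⌋₊ : ℝ) := hnn _ (Nat.cast_nonneg _)
    have hft : f (⌊t⌋₊ : ℝ) ≤ f t :=
      hmono (Set.mem_Ici.2 (Nat.cast_nonneg _)) (Set.mem_Ici.2 ht0.le) hnt
    calc f (⌊t⌋₊ : ℝ) / ((⌊t⌋₊ : ℝ) + 1) ≤ f (⌊t⌋₊ : ℝ) / t := by gcongr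
      _ ≤ f t / t := by gcongr
  · filter_upwards [eventually_ge_atTop (1:ℝ)] with t ht
    have ht0 : (0:ℝ) < t := lt_of_lt_of_le one_pos ht
    have hfl : (1:ℕ) ≤ ⌊t⌋₊ := Nat.le_floor (by exact_mod_cast ht)
    have hfl' : (0:ℝ) < (⌊t⌋₊ : ℝ) := by exact_mod_cast hfl
    have hnt : ((⌊t⌋₊ : ℕ) : ℝ) ≤ t := Nat.floor_le ht0.le
    have htn1 : t ≤ (⌊t⌋₊ : ℝ) + 1 := (Nat.lt_floor_add_one t).le
    have hfn : 0 ≤ f ((⌊t⌋₊ : ℝ) + 1) := hnn _ (by positivity)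
    have hft : f t ≤ f ((⌊t⌋₊ : ℝ) + 1) :=
      hmono (Set.mem_Ici.2 ht0.le) (Set.mem_Ici.2 (by positivity)) htn1
    calc f t / t ≤ f ((⌊t⌋₊ : ℝ) + 1) / t := by gcongr
      _ ≤ f ((⌊t⌋₊ : ℝ) + 1) / (⌊t⌋₊ : ℝ) := by gcongr

/-- If a process `Λ` with a.s. nondecreasing paths and `Λ(0) = 0`
satisfies condition (DIFF) with exponent `ζ > 1`, then almost surely
`Λ(t)/t → 1` as `t → ∞`. -/
theorem ratio_tendsto_one
    {Ω : Type*} [MeasurableSpace Ω] (P : Measure Ω) [IsProbabilityMeasure P]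
    (ζ : ℝ) (hζ : 1 < ζ)
    (Λ : ℝ → Ω → ℝ)
    (hmono : ∀ᵐ ω ∂P, MonotoneOn (fun t => Λ t ω) (Set.Ici (0 : ℝ)))
    (hzero : ∀ᵐ ω ∂P, Λ 0 ω = 0)
    (hDIFF : ∀ ε : ℝ, 0 < ε → ∃ c : ℝ, ∀ a b : ℝ, 0 ≤ a → a ≤ b →
      P {ω | |Λ b ω - Λ a ω - (b - a)| > (b - a) ^ ((1 : ℝ) / 2 + ε)}
        ≤ ENNReal.ofReal (c * (b - a) ^ (-ζ))) :
    ∀ᵐ ω ∂P, Tendsto (fun t : ℝ => Λ t ω / t) atTop (nhds 1) := by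
  obtain ⟨c, hc⟩ := hDIFF (1/4) (by norm_num)
  set s : ℕ → Set Ω := fun n =>
    {ω | |Λ (n : ℝ) ω - Λ 0 ω - ((n : ℝ) - 0)| > ((n : ℝ) - 0) ^ ((1 : ℝ) / 2 + 1/4)} with hs
  have hsn : ∀ n : ℕ, P (s n) ≤ ENNReal.ofReal (c * ((n : ℝ) - 0) ^ (-ζ)) :=
    fun n => hc 0 (n : ℝ) le_rfl (Nat.cast_nonneg n)
  have hsummable : Summable (fun n : ℕ => (n : ℝ) ^ (-ζ)) :=
    Real.summable_nat_rpow.2 (by linarith)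
  have hsum : (∑' n, P (s n)) ≠ ⊤ := by
    apply LT.lt.ne
    have h1 : ∀ n : ℕ, P (s n) ≤ ENNReal.ofReal |c| * ENNReal.ofReal ((n : ℝ) ^ (-ζ)) := by
      intro n
      refine (hsn n).trans ?_
      rw [← ENNReal.ofReal_mul (abs_nonneg c)]
      apply ENNReal.ofReal_le_ofReal
      rw [sub_zero]
      exact mul_le_mul_of_nonneg_right (le_abs_self c)
        (Real.rpow_nonneg (Nat.cast_nonneg n) _)
    calc (∑' n, P (s n)) ≤ ∑' n : ℕ, ENNReal.ofReal |c| * ENNReal.ofReal ((n : ℝ) ^ (-ζ)) :=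
          ENNReal.tsum_le_tsum h1
      _ = ENNReal.ofReal |c| * ∑' n : ℕ, ENNReal.ofReal ((n : ℝ) ^ (-ζ)) :=
          ENNReal.tsum_mul_left
      _ = ENNReal.ofReal |c| * ENNReal.ofReal (∑' n : ℕ, (n : ℝ) ^ (-ζ)) := by
          rw [ENNReal.ofReal_tsum_of_nonneg (fun n => Real.rpow_nonneg (Nat.cast_nonneg n) _)
            hsummable]
      _ < ⊤ := ENNReal.mul_lt_top ENNReal.ofReal_lt_top ENNReal.ofReal_lt_top
  filter_upwards [hmono, hzero, MeasureTheory.ae_eventually_notMem hsum] with ω h1 h2 h3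
  apply aux_ratio_tendsto _ h1 h2
  -- integer limit
  have key : ∀ᶠ n : ℕ in atTop, |Λ (n : ℝ) ω / n - 1| ≤ (n : ℝ) ^ (-(1/4 : ℝ)) := by
    filter_upwards [h3, eventually_ge_atTop 1] with n hn hn1
    have hn0 : (0:ℝ) < (n : ℝ) := by exact_mod_cast hn1
    simp only [hs, Set.mem_setOf_eq, not_lt, h2, sub_zero] at hn
    have heq : Λ (n : ℝ) ω / n - 1 = (Λ (n : ℝ) ω - n) / n := by field_simp
    rw [heq, abs_div, abs_of_pos hn0]
    calc |Λ (n : ℝ) ω - n| / (n : ℝ) ≤ (n : ℝ) ^ ((1:ℝ)/2 + 1/4) / (n : ℝ) := by gcongr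
      _ = (n : ℝ) ^ (-(1/4 : ℝ)) := by
          rw [show (-(1/4:ℝ)) = ((1:ℝ)/2 + 1/4) - 1 by norm_num, Real.rpow_sub hn0,
            Real.rpow_one]
  have key' : ∀ᶠ n : ℕ in atTop, ‖Λ (n : ℝ) ω / n - 1‖ ≤ (n : ℝ) ^ (-(1/4 : ℝ)) := by
    simpa [Real.norm_eq_abs] using key
  have hg : Tendsto (fun n : ℕ => (n : ℝ) ^ (-(1/4 : ℝ))) atTop (nhds 0) :=
    (tendsto_rpow_neg_atTop (by norm_num)).comp tendsto_natCast_atTop_atTop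
  have h0' : Tendsto (fun n : ℕ => Λ (n : ℝ) ω / n - 1) atTop (nhds 0) :=
    squeeze_zero_norm' key' hg
  have := h0'.add_const 1
  simpa using this
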